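/- Let d ≥ 1, let X and X' be aperiodic minimal subshifts over nonempty finite alphabets, and let h : SX → SX' be a homeomorphism with h(ι(X)) = ι'(X'). Let c be the cocycle of h. Then: (a) for every ω ∈ X and every n ∈ ℤ^d, the vector c(ι(ω), n) lies in ℤ^d (it is a return vector for X'); and (b) for every λ > 0 there exists ν ∈ ℕ such that for all n ∈ ℤ^d with ‖n‖ ≤ λ and all ω₁, ω₂ ∈ X satisfying ω₁(j) = ω₂(j) for all j ∈ B_ν, one has c(ι(ω₁), n) = c(ι(ω₂), n). In particular, for each fixed n ∈ ℤ^d, the map ω ↦ c(ι(ω), n) is locally constant on X and has finite range. -/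

import Mathlib

open Filter Topology

abbrev Zd (d : ℕ) := Fin d → ℤ
abbrev Rd (d : ℕ) := EuclideanSpace ℝ (Fin d)

def toRd {d : ℕ} (n : Zd d) : Rd d := WithLp.toLp 2 (fun i => (n i : ℝ))

def shift {d : ℕ} {A : Type*} (n : Zd d) (ω : Zd d → A) : Zd d → A := fun k => ω (k - n)

structure IsSubshift {d : ℕ} {A : Type*} [TopologicalSpace A] (X : Set (Zd d → A)) : Prop where
  nonempty : X.Nonempty
  closed : IsClosed X
  shift_mem : ∀ n : Zd d, ∀ ω ∈ X, shift n ω ∈ X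

def IsMinimal {d : ℕ} {A : Type*} [TopologicalSpace A] (X : Set (Zd d → A)) : Prop :=
  ∀ ω ∈ X, X ⊆ closure {ω' | ∃ n : Zd d, ω' = shift n ω}

def IsAperiodic {d : ℕ} {A : Type*} (X : Set (Zd d → A)) : Prop :=
  ∀ ω ∈ X, ∀ n : Zd d, shift n ω = ω → n = 0

def suspRel {d : ℕ} {A : Type*} [TopologicalSpace A] (X : Set (Zd d → A)) :
    X × Rd d → X × Rd d → Prop :=
  fun p q => ∃ n : Zd d, (q.1 : Zd d → A) = shift n (p.1 : Zd d → A) ∧ q.2 = p.2 - toRd n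

abbrev Susp {d : ℕ} {A : Type*} [TopologicalSpace A] (X : Set (Zd d → A)) :=
  Quot (suspRel X)

instance {d : ℕ} {A : Type*} [TopologicalSpace A] (X : Set (Zd d → A)) :
    VAdd (Rd d) (Susp X) where
  vadd t := Quot.lift (fun p => Quot.mk (suspRel X) (p.1, p.2 + t))
    (fun p q hpq => by
      obtain ⟨n, h1, h2⟩ := hpq
      exact Quot.sound ⟨n, h1, by rw [h2]; exact sub_add_eq_add_sub _ _ _⟩)

def iota {d : ℕ} {A : Type*} [TopologicalSpace A] (X : Set (Zd d → A)) : X → Susp X :=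
  fun ω => Quot.mk _ (ω, 0)

def box (d : ℕ) (n : ℕ) : Set (Zd d) := {k | ∀ i, |k i| ≤ (n : ℤ)}

noncomputable def complexity {d : ℕ} {A : Type*} (X : Set (Zd d → A)) (n : ℕ) : ℕ :=
  Set.ncard ((fun ω => (fun k : box d n => ω k.1)) '' X)

noncomputable def repetitivity {d : ℕ} {A : Type*} (X : Set (Zd d → A)) (n : ℕ) : ℝ :=
  sInf {C : ℝ | 0 ≤ C ∧ ∀ ω ∈ X, ∀ ω₀ ∈ X, ∃ k : Zd d,
    ‖toRd k‖ ≤ C ∧ ∀ j ∈ box d n, shift k ω j = ω₀ j}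

def IsCocycleFor {d : ℕ} {A A' : Type*} [TopologicalSpace A] [TopologicalSpace A']
    {X : Set (Zd d → A)} {X' : Set (Zd d → A')}
    (h : Susp X ≃ₜ Susp X') (c : Susp X × Rd d → Rd d) : Prop :=
  ∀ (T : Susp X) (x : Rd d), h (x +ᵥ T) = c (T, x) +ᵥ h T

section Basics

variable {d : ℕ} {A : Type*}

lemma shift_zero (ω : Zd d → A) : shift 0 ω = ω := by
  funext k; simp [shift]

lemma shift_shift (a b : Zd d) (ω : Zd d → A) : shift a (shift b ω) = shift (a + b) ω := by
  funext k; simp [shift, sub_sub]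

lemma toRd_zero : toRd (0 : Zd d) = 0 := by
  ext i; simp [toRd]

lemma toRd_add (a b : Zd d) : toRd (a + b) = toRd a + toRd b := by
  ext i; simp [toRd]

lemma toRd_neg (a : Zd d) : toRd (-a) = -toRd a := by
  ext i; simp [toRd]

lemma toRd_inj {a b : Zd d} (hab : toRd a = toRd b) : a = b := by
  funext i
  have := congrArg (fun v : Rd d => v i) hab
  simpa [toRd] using this

lemma abs_coord_le_norm (v : Rd d) (i : Fin d) : |v i| ≤ ‖v‖ := by
  rw [EuclideanSpace.norm_eq]
  rw [← Real.sqrt_sq_eq_abs]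
  apply Real.sqrt_le_sqrt
  have : |v i| ^ 2 ≤ ∑ j : Fin d, ‖v j‖ ^ 2 := by
    have := Finset.single_le_sum (f := fun j => ‖v j‖ ^ 2)
      (fun j _ => by positivity) (Finset.mem_univ i)
    simpa [Real.norm_eq_abs, sq_abs] using this
  simpa [sq_abs] using this

lemma one_le_norm_toRd {m : Zd d} (hm : m ≠ 0) : 1 ≤ ‖toRd m‖ := by
  obtain ⟨i, hi⟩ := Function.ne_iff.mp hm
  have h1 : (1 : ℝ) ≤ |(m i : ℝ)| := by
    have : 1 ≤ |m i| := Int.one_le_abs (by simpa using hi)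
    calc (1:ℝ) = ((1:ℤ):ℝ) := by norm_num
    _ ≤ ((|m i| : ℤ) : ℝ) := by exact_mod_cast this
    _ = |(m i : ℝ)| := by push_cast; ring
  exact h1.trans (by simpa [toRd] using abs_coord_le_norm (toRd m) i)

lemma toRd_eq_zero {m : Zd d} (hm : toRd m = 0) : m = 0 :=
  toRd_inj (by rw [hm, toRd_zero])

lemma norm_toRd_lt_one {m : Zd d} (hm : ‖toRd m‖ < 1) : m = 0 := by
  by_contra hm0
  exact absurd hm (not_lt.mpr (one_le_norm_toRd hm0))

lemma finite_lattice_ball (M : ℝ) : {m : Zd d | ‖toRd m‖ ≤ M}.Finite := by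
  apply Set.Finite.subset (Set.Finite.pi (t := fun _ : Fin d => Set.Icc (-⌈M⌉) ⌈M⌉)
    (fun _ => Set.finite_Icc _ _))
  intro m hm
  simp only [Set.mem_setOf_eq] at hm
  intro i _
  have h1 : |(m i : ℝ)| ≤ M := by
    have := abs_coord_le_norm (toRd m) i
    simpa [toRd] using this.trans hm
  have h2 : ((|m i| : ℤ) : ℝ) ≤ (⌈M⌉ : ℝ) := by
    calc ((|m i| : ℤ) : ℝ) = |(m i : ℝ)| := by push_cast; ring
    _ ≤ M := h1
    _ ≤ ⌈M⌉ := Int.le_ceil M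
  have : |m i| ≤ ⌈M⌉ := by exact_mod_cast h2
  exact Set.mem_Icc.mpr (abs_le.mp this)

variable [TopologicalSpace A] {X : Set (Zd d → A)}

lemma suspRel_equiv (X : Set (Zd d → A)) : Equivalence (suspRel X) := by
  constructor
  · intro p
    exact ⟨0, by rw [shift_zero], by rw [toRd_zero, sub_zero]⟩
  · rintro p q ⟨n, h1, h2⟩
    refine ⟨-n, ?_, ?_⟩
    · rw [h1, shift_shift]; simp [shift_zero]
    · rw [h2, toRd_neg]; abel
  · rintro p q r ⟨n, h1, h2⟩ ⟨m, h3, h4⟩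
    refine ⟨m + n, ?_, ?_⟩
    · rw [h3, h1, shift_shift]
    · rw [h4, h2, toRd_add]; abel

lemma susp_mk_eq_iff {p q : ↥X × Rd d} :
    Quot.mk (suspRel X) p = Quot.mk (suspRel X) q ↔ suspRel X p q := by
  rw [Quot.eq]
  exact (suspRel_equiv X).eqvGen_iff

lemma shift_mem_inj (hap : IsAperiodic X) (ω : ↥X) {a b : Zd d}
    (hab : shift a (ω : Zd d → A) = shift b (ω : Zd d → A)) : a = b := by
  have : shift (-b) (shift a (ω : Zd d → A)) = shift (-b) (shift b (ω : Zd d → A)) := by rw [hab]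
  rw [shift_shift, shift_shift] at this
  simp only [neg_add_cancel, shift_zero] at this
  exact (neg_add_eq_zero.mp (hap ω ω.2 (-b + a) this)).symm

end Basics
section SuspTop

variable {d : ℕ} {A : Type*} [TopologicalSpace A] {X : Set (Zd d → A)}

lemma vadd_mk (t : Rd d) (p : ↥X × Rd d) :
    t +ᵥ Quot.mk (suspRel X) p = Quot.mk (suspRel X) (p.1, p.2 + t) := rfl

lemma zero_vadd_susp (T : Susp X) : (0 : Rd d) +ᵥ T = T := by
  induction T using Quot.ind with
  | _ p => rw [vadd_mk, add_zero]

lemma vadd_vadd_susp (s t : Rd d) (T : Susp X) : s +ᵥ (t +ᵥ T) = (t + s) +ᵥ T := by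
  induction T using Quot.ind with
  | _ p => rw [vadd_mk, vadd_mk, vadd_mk, add_assoc]

/-- The shift homeomorphism-like self-map on the subtype. -/
def shiftMap (hX : IsSubshift X) (n : Zd d) (ω : ↥X) : ↥X :=
  ⟨shift n (ω : Zd d → A), hX.shift_mem n _ ω.2⟩

lemma continuous_subtype_shift (hX : IsSubshift X) (n : Zd d) :
    Continuous (shiftMap hX n) := by
  apply Continuous.subtype_mk
  exact continuous_pi fun k => (continuous_apply (k - n)).comp continuous_subtype_val

lemma isOpenMap_susp_mk (hX : IsSubshift X) : IsOpenMap (Quot.mk (suspRel X)) := by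
  intro U hU
  rw [isQuotientMap_quot_mk.isOpen_preimage.symm]
  have : Quot.mk (suspRel X) ⁻¹' (Quot.mk (suspRel X) '' U) =
      ⋃ n : Zd d, (fun p : ↥X × Rd d => (shiftMap hX n p.1, p.2 - toRd n)) ⁻¹' U := by
    ext ⟨ω, x⟩
    simp only [Set.mem_preimage, Set.mem_image, Set.mem_iUnion]
    constructor
    · rintro ⟨p, hpU, hp⟩
      obtain ⟨n, h1, h2⟩ := susp_mk_eq_iff.mp hp.symm
      refine ⟨n, ?_⟩
      have : (shiftMap hX n ω, x - toRd n) = p := by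
        refine Prod.ext (Subtype.ext ?_) h2.symm
        exact h1.symm
      rwa [this]
    · rintro ⟨n, hn⟩
      exact ⟨_, hn, (Quot.sound ⟨n, rfl, rfl⟩).symm⟩
  rw [this]
  exact isOpen_iUnion fun n => hU.preimage
    (((continuous_subtype_shift hX n).comp continuous_fst).prodMk
      (continuous_snd.sub continuous_const))

lemma continuous_vadd_susp (hX : IsSubshift X) :
    Continuous fun q : Rd d × Susp X => q.1 +ᵥ q.2 := by
  let e : Rd d × (↥X × Rd d) → Rd d × Susp X := fun q => (q.1, Quot.mk _ q.2)
  have he_cont : Continuous e := continuous_fst.prodMk (continuous_quot_mk.comp continuous_snd)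
  have he_open : IsOpenMap e := IsOpenMap.prodMap IsOpenMap.id (isOpenMap_susp_mk hX)
  have he_surj : Function.Surjective e := by
    rintro ⟨t, T⟩
    obtain ⟨p, hp⟩ := Quot.exists_rep T
    exact ⟨(t, p), by simp [e, hp]⟩
  have hcomp : Continuous fun q : Rd d × (↥X × Rd d) =>
      Quot.mk (suspRel X) (q.2.1, q.2.2 + q.1) := by
    apply continuous_quot_mk.comp
    exact (continuous_fst.comp continuous_snd).prodMk
      ((continuous_snd.comp continuous_snd).add continuous_fst)
  rw [continuous_def]
  intro W hW
  have : (fun q : Rd d × Susp X => q.1 +ᵥ q.2) ⁻¹' W =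
      e '' ((fun q : Rd d × (↥X × Rd d) => Quot.mk (suspRel X) (q.2.1, q.2.2 + q.1)) ⁻¹' W) := by
    ext q
    constructor
    · intro hq
      obtain ⟨q', hq'⟩ := he_surj q
      refine ⟨q', ?_, hq'⟩
      simp only [Set.mem_preimage]
      have : Quot.mk (suspRel X) (q'.2.1, q'.2.2 + q'.1) = q.1 +ᵥ q.2 := by
        rw [← hq']; rfl
      rwa [this]
    · rintro ⟨q', hq', rfl⟩
      exact hq'
  rw [this]
  exact he_open _ (hcomp.isOpen_preimage W hW)

lemma vadd_cancel_susp (hap : IsAperiodic X) {v w : Rd d} {T : Susp X}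
    (hvw : v +ᵥ T = w +ᵥ T) : v = w := by
  induction T using Quot.ind with
  | _ p =>
    rw [vadd_mk, vadd_mk] at hvw
    obtain ⟨n, h1, h2⟩ := susp_mk_eq_iff.mp hvw
    have hn : n = 0 := hap _ p.1.2 n h1.symm
    rw [hn, toRd_zero, sub_zero] at h2
    exact add_left_cancel h2.symm

lemma t2_susp [T2Space A] (hX : IsSubshift X) (hap : IsAperiodic X) : T2Space (Susp X) := by
  constructor
  intro P Q hPQ
  obtain ⟨p, hp⟩ := Quot.exists_rep P
  obtain ⟨q, hq⟩ := Quot.exists_rep Q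
  by_cases hl : ∃ k : Zd d, p.2 - q.2 = toRd k
  · -- lattice case : move p to have the same second coordinate as q
    obtain ⟨k, hk⟩ := hl
    set p' : ↥X × Rd d := (shiftMap hX k p.1, q.2) with hp'
    have hpp' : Quot.mk (suspRel X) p = Quot.mk (suspRel X) p' := by
      apply Quot.sound
      exact ⟨k, rfl, by rw [← hk]; abel⟩
    have hne : p'.1 ≠ q.1 := by
      intro hcontra
      apply hPQ
      rw [← hp, ← hq, hpp']
      apply Quot.sound
      exact ⟨0, by rw [hcontra, shift_zero], by rw [toRd_zero, sub_zero]⟩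
    obtain ⟨U, V, hU, hV, hpU, hqV, hUV⟩ := t2_separation hne
    refine ⟨Quot.mk _ '' (U ×ˢ Metric.ball q.2 4⁻¹), Quot.mk _ '' (V ×ˢ Metric.ball q.2 4⁻¹),
      isOpenMap_susp_mk hX _ (hU.prod Metric.isOpen_ball),
      isOpenMap_susp_mk hX _ (hV.prod Metric.isOpen_ball), ?_, ?_, ?_⟩
    · rw [← hp, hpp']
      exact ⟨p', ⟨hpU, Metric.mem_ball_self (by norm_num)⟩, rfl⟩
    · rw [← hq]
      exact ⟨q, ⟨hqV, Metric.mem_ball_self (by norm_num)⟩, rfl⟩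
    · rw [Set.disjoint_left]
      rintro T ⟨a, ⟨haU, hab⟩, ha⟩ ⟨b, ⟨hbV, hbb⟩, hb⟩
      obtain ⟨n, h1, h2⟩ := susp_mk_eq_iff.mp (ha.trans hb.symm)
      have hn : n = 0 := by
        apply norm_toRd_lt_one
        have : toRd n = a.2 - b.2 := by rw [h2]; abel
        rw [this]
        calc ‖a.2 - b.2‖ ≤ ‖a.2 - q.2‖ + ‖q.2 - b.2‖ := by
              have := norm_sub_le_norm_sub_add_norm_sub a.2 q.2 b.2
              exact this
        _ < 4⁻¹ + 4⁻¹ := by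
              apply add_lt_add
              · exact mem_ball_iff_norm.mp hab
              · rw [norm_sub_rev]; exact mem_ball_iff_norm.mp hbb
        _ < 1 := by norm_num
      rw [hn, shift_zero] at h1
      exact Set.disjoint_left.mp hUV haU ((Subtype.ext h1 : b.1 = a.1) ▸ hbV)
  · -- non-lattice case : separate using a coordinate circle map
    have : ∃ i : Fin d, ¬∃ z : ℤ, p.2 i - q.2 i = z := by
      by_contra hcon
      push_neg at hcon
      apply hl
      choose z hz using hcon
      exact ⟨z, by ext i; simpa [toRd] using hz i⟩
    obtain ⟨i, hi⟩ := this
    let f : Susp X → AddCircle (1 : ℝ) :=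
      Quot.lift (fun r : ↥X × Rd d => ((r.2 i : ℝ) : AddCircle (1:ℝ)))
        (by
          rintro a b ⟨n, h1, h2⟩
          show ((a.2 i : ℝ) : AddCircle (1:ℝ)) = ((b.2 i : ℝ) : AddCircle (1:ℝ))
          rw [h2]
          have hco : (a.2 - toRd n) i = a.2 i - (n i : ℝ) := by simp [toRd]
          rw [hco, QuotientAddGroup.eq_iff_sub_mem]
          refine AddSubgroup.mem_zmultiples_iff.mpr ⟨n i, ?_⟩
          simp)
    have hf : Continuous f := by
      apply continuous_quot_lift
      exact (AddCircle.continuous_mk' (1:ℝ)).comp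
        ((EuclideanSpace.proj (𝕜 := ℝ) i).continuous.comp continuous_snd)
    have hfPQ : f P ≠ f Q := by
      rw [← hp, ← hq]
      show ((p.2 i : ℝ) : AddCircle (1:ℝ)) ≠ ((q.2 i : ℝ) : AddCircle (1:ℝ))
      intro hcontra
      rw [QuotientAddGroup.eq_iff_sub_mem] at hcontra
      obtain ⟨z, hz⟩ := AddSubgroup.mem_zmultiples_iff.mp hcontra
      exact hi ⟨z, by rw [← hz]; simp⟩
    obtain ⟨u, v, hu, hv, hfu, hfv, huv⟩ := t2_separation hfPQ
    exact ⟨f ⁻¹' u, f ⁻¹' v, hu.preimage hf, hv.preimage hf, hfu, hfv,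
      Set.disjoint_left.mpr fun T hTu hTv => Set.disjoint_left.mp huv hTu hTv⟩

end SuspTop
section Sections

variable {d : ℕ} {A : Type*} [TopologicalSpace A] {Y : Set (Zd d → A)}

lemma exists_chart_section (hY : IsSubshift Y) (z₀ : Rd d) :
    ∃ s : Susp Y → ↥Y × Rd d,
      ContinuousOn s (Quot.mk (suspRel Y) '' (Set.univ ×ˢ Metric.ball z₀ 4⁻¹)) ∧
      ∀ v ∈ Quot.mk (suspRel Y) '' (Set.univ ×ˢ Metric.ball z₀ 4⁻¹),
        Quot.mk (suspRel Y) (s v) = v := by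
  haveI : Nonempty ↥Y := hY.nonempty.to_subtype
  set W : Set (↥Y × Rd d) := Set.univ ×ˢ Metric.ball z₀ 4⁻¹ with hW
  set V := Quot.mk (suspRel Y) '' W with hV
  have hWopen : IsOpen W := isOpen_univ.prod Metric.isOpen_ball
  have inj : Set.InjOn (Quot.mk (suspRel Y)) W := by
    rintro a ⟨-, hab⟩ b ⟨-, hbb⟩ hmk
    obtain ⟨n, h1, h2⟩ := susp_mk_eq_iff.mp hmk
    have hn : n = 0 := by
      apply norm_toRd_lt_one
      have : toRd n = a.2 - b.2 := by rw [h2]; abel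
      rw [this]
      calc ‖a.2 - b.2‖ ≤ ‖a.2 - z₀‖ + ‖z₀ - b.2‖ := norm_sub_le_norm_sub_add_norm_sub _ _ _
      _ < 4⁻¹ + 4⁻¹ := by
            refine add_lt_add (mem_ball_iff_norm.mp hab) ?_
            rw [norm_sub_rev]; exact mem_ball_iff_norm.mp hbb
      _ < 1 := by norm_num
    rw [hn, shift_zero] at h1
    rw [hn, toRd_zero, sub_zero] at h2
    exact Prod.ext (Subtype.ext h1.symm) h2.symm
  refine ⟨Function.invFunOn (Quot.mk (suspRel Y)) W, ?_, ?_⟩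
  · rw [continuousOn_iff]
    intro v hv t ht hst
    refine ⟨Quot.mk (suspRel Y) '' (t ∩ W), isOpenMap_susp_mk hY _ (ht.inter hWopen), ?_, ?_⟩
    · obtain ⟨p, hpW, hp⟩ := hv
      have hmem : Function.invFunOn (Quot.mk (suspRel Y)) W v ∈ W :=
        Function.invFunOn_mem ⟨p, hpW, hp⟩
      have heq : Quot.mk (suspRel Y) (Function.invFunOn (Quot.mk (suspRel Y)) W v) = v :=
        Function.invFunOn_eq ⟨p, hpW, hp⟩
      exact ⟨_, ⟨hst, hmem⟩, heq⟩
    · rintro v' ⟨⟨p, ⟨hpt, hpW⟩, hp⟩, hv'V⟩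
      obtain ⟨r, hrW, hr⟩ := hv'V
      have hmem : Function.invFunOn (Quot.mk (suspRel Y)) W v' ∈ W :=
        Function.invFunOn_mem ⟨r, hrW, hr⟩
      have heq : Quot.mk (suspRel Y) (Function.invFunOn (Quot.mk (suspRel Y)) W v') = v' :=
        Function.invFunOn_eq ⟨r, hrW, hr⟩
      have : Function.invFunOn (Quot.mk (suspRel Y)) W v' = p :=
        inj hmem hpW (heq.trans hp.symm)
      simpa [Set.mem_preimage, this] using hpt
  · rintro v ⟨p, hpW, hp⟩
    exact Function.invFunOn_eq ⟨p, hpW, hp⟩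

end Sections

section CCont

variable {d : ℕ} {A A' : Type*}
    [Fintype A] [Nonempty A] [TopologicalSpace A] [DiscreteTopology A]
    [Fintype A'] [Nonempty A'] [TopologicalSpace A'] [DiscreteTopology A']
    {X : Set (Zd d → A)} {X' : Set (Zd d → A')}

lemma c_continuous (hX : IsSubshift X) (hX' : IsSubshift X') (hX'ap : IsAperiodic X')
    (h : Susp X ≃ₜ Susp X') (c : Susp X × Rd d → Rd d) (hc : IsCocycleFor h c)
    (S : Susp X) : Continuous fun x : Rd d => c (S, x) := by
  obtain ⟨p, hp⟩ := Quot.exists_rep S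
  obtain ⟨q, hq⟩ := Quot.exists_rep (h S)
  have hvS : ∀ x : Rd d, x +ᵥ S = Quot.mk (suspRel X) (p.1, p.2 + x) := by
    intro x; rw [← hp]; rfl
  have key : ∀ x : Rd d, h (x +ᵥ S) = Quot.mk (suspRel X') (q.1, q.2 + c (S, x)) := by
    intro x; rw [hc S x, ← hq]; rfl
  set Γ : Rd d → Susp X' := fun y => h (y +ᵥ S) with hΓ
  have hΓcont : Continuous Γ := by
    apply h.continuous.comp
    have : (fun y : Rd d => y +ᵥ S) = fun y => Quot.mk (suspRel X) (p.1, p.2 + y) := by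
      funext y; exact hvS y
    rw [this]
    exact continuous_quot_mk.comp (continuous_const.prodMk (continuous_const.add continuous_id))
  rw [continuous_iff_continuousAt]
  intro x₀
  set z₀ : Rd d := q.2 + c (S, x₀) with hz₀
  obtain ⟨s, hscont, hssec⟩ := exists_chart_section hX' z₀
  set V := Quot.mk (suspRel X') '' (Set.univ ×ˢ Metric.ball z₀ 4⁻¹) with hVdef
  have hVopen : IsOpen V := isOpenMap_susp_mk hX' _ (isOpen_univ.prod Metric.isOpen_ball)
  have hΓx₀V : Γ x₀ ∈ V := by
    rw [hΓ]
    simp only []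
    rw [key x₀]
    exact ⟨(q.1, z₀), ⟨Set.mem_univ _, Metric.mem_ball_self (by norm_num)⟩, rfl⟩
  obtain ⟨δ, hδpos, hδ⟩ : ∃ δ > 0, Metric.ball x₀ δ ⊆ Γ ⁻¹' V := by
    have := hΓcont.continuousAt (x := x₀)
    have hmem : Γ ⁻¹' V ∈ 𝓝 x₀ := this.preimage_mem_nhds (hVopen.mem_nhds hΓx₀V)
    exact Metric.mem_nhds_iff.mp hmem
  -- the first coordinate of the section is constant on the ball
  have hconst : ∀ y ∈ Metric.ball x₀ δ, (s (Γ y)).1 = (s (Γ x₀)).1 := by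
    have hpc : IsPreconnected ((fun y => (s (Γ y)).1) '' Metric.ball x₀ δ) := by
      apply IsPreconnected.image
      · exact (convex_ball x₀ δ).isPreconnected
      · apply ContinuousOn.comp (continuous_fst.comp_continuousOn hscont) hΓcont.continuousOn
        exact fun y hy => hδ hy
    have hsub : Set.Subsingleton ((fun y => (s (Γ y)).1) '' Metric.ball x₀ δ) := by
      exact hpc.subsingleton
    intro y hy
    exact hsub ⟨y, hy, rfl⟩ ⟨x₀, Metric.mem_ball_self hδpos, rfl⟩
  -- relation between the section value and the cocycle
  have hrel : ∀ y ∈ Metric.ball x₀ δ, ∃ k : Zd d,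
      ((s (Γ x₀)).1 : Zd d → A') = shift k (q.1 : Zd d → A') ∧
      (s (Γ y)).2 = (q.2 + c (S, y)) - toRd k := by
    intro y hy
    have h1 : Quot.mk (suspRel X') (s (Γ y)) = Γ y := hssec _ (hδ hy)
    have h2 : Γ y = Quot.mk (suspRel X') (q.1, q.2 + c (S, y)) := key y
    obtain ⟨k, hk1, hk2⟩ := susp_mk_eq_iff.mp (h2.symm.trans h1.symm)
    exact ⟨k, by rw [← hconst y hy]; exact hk1, hk2⟩
  obtain ⟨k₀, hk₀, -⟩ := hrel x₀ (Metric.mem_ball_self hδpos)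
  have heq : ∀ y ∈ Metric.ball x₀ δ, c (S, y) = (s (Γ y)).2 - q.2 + toRd k₀ := by
    intro y hy
    obtain ⟨k, hk1, hk2⟩ := hrel y hy
    have : k = k₀ := shift_mem_inj hX'ap q.1 (hk1.symm.trans hk₀)
    rw [← this, hk2]; abel
  have hFcont : ContinuousAt (fun y => (s (Γ y)).2 - q.2 + toRd k₀) x₀ := by
    apply ContinuousAt.add _ continuousAt_const
    apply ContinuousAt.sub _ continuousAt_const
    apply ContinuousAt.comp (continuousAt_snd)
    apply ContinuousWithinAt.continuousAt _ (Metric.ball_mem_nhds x₀ hδpos)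
    apply ContinuousOn.continuousWithinAt
    · exact ContinuousOn.comp hscont hΓcont.continuousOn (fun y hy => hδ hy)
    · exact Metric.mem_ball_self hδpos
  apply hFcont.congr
  filter_upwards [Metric.ball_mem_nhds x₀ hδpos] with y hy
  exact (heq y hy).symm
end CCont
section Bounds

variable {d : ℕ} {A A' : Type*}
    [Fintype A] [Nonempty A] [TopologicalSpace A] [DiscreteTopology A]
    [Fintype A'] [Nonempty A'] [TopologicalSpace A'] [DiscreteTopology A']
    {X : Set (Zd d → A)} {X' : Set (Zd d → A')}

lemma c_zero (hX'ap : IsAperiodic X')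
    (h : Susp X ≃ₜ Susp X') (c : Susp X × Rd d → Rd d) (hc : IsCocycleFor h c)
    (S : Susp X) : c (S, 0) = 0 := by
  have e1 := hc S 0
  rw [zero_vadd_susp] at e1
  have e2 : (0 : Rd d) +ᵥ h S = c (S, 0) +ᵥ h S := by rw [zero_vadd_susp]; exact e1
  exact (vadd_cancel_susp hX'ap e2).symm

lemma c_add (hX'ap : IsAperiodic X')
    (h : Susp X ≃ₜ Susp X') (c : Susp X × Rd d → Rd d) (hc : IsCocycleFor h c)
    (S : Susp X) (y z : Rd d) : c (S, y + z) = c (S, z) + c (z +ᵥ S, y) := by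
  have e1 : h ((y + z) +ᵥ S) = c (S, y + z) +ᵥ h S := hc S (y + z)
  have e3 : h (y +ᵥ (z +ᵥ S)) = c (z +ᵥ S, y) +ᵥ h (z +ᵥ S) := hc _ y
  rw [hc S z] at e3
  rw [vadd_vadd_susp y z S] at e3
  rw [vadd_vadd_susp (c (z +ᵥ S, y)) (c (S, z)) (h S)] at e3
  rw [add_comm z y] at e3
  rw [e1] at e3
  exact (vadd_cancel_susp hX'ap e3)

lemma exists_rep_box (hX : IsSubshift X) (S : Susp X) :
    ∃ p : ↥X × Rd d, Quot.mk (suspRel X) p = S ∧ ∀ i, p.2 i ∈ Set.Icc (0:ℝ) 1 := by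
  obtain ⟨q, hq⟩ := Quot.exists_rep S
  set n : Zd d := fun i => ⌊q.2 i⌋ with hn
  refine ⟨(shiftMap hX n q.1, q.2 - toRd n), ?_, ?_⟩
  · exact (Quot.sound ⟨n, rfl, rfl⟩).symm.trans hq
  · intro i
    show (q.2 - toRd n) i ∈ Set.Icc (0:ℝ) 1
    rw [show (q.2 - toRd n) i = q.2 i - ((⌊q.2 i⌋ : ℤ) : ℝ) by simp [toRd, hn]]
    rw [Set.mem_Icc]
    constructor
    · linarith [Int.floor_le (q.2 i)]
    · linarith [Int.sub_one_lt_floor (q.2 i)]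

lemma isCompact_box01 : IsCompact {x : Rd d | ∀ i, x i ∈ Set.Icc (0:ℝ) 1} := by
  have : {x : Rd d | ∀ i, x i ∈ Set.Icc (0:ℝ) 1} =
      ⇑(EuclideanSpace.equiv (Fin d) ℝ).toHomeomorph ⁻¹'
        (Set.univ.pi fun _ => Set.Icc (0:ℝ) 1) := by
    ext x
    simp only [Set.mem_setOf_eq, Set.mem_preimage, Set.mem_pi, Set.mem_univ, true_implies]
    exact ⟨fun hx i => hx i, fun hx i => hx i⟩
  rw [this, Homeomorph.isCompact_preimage]
  exact isCompact_univ_pi fun _ => isCompact_Icc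

lemma key_eps (hX : IsSubshift X) (hX' : IsSubshift X') (hX'ap : IsAperiodic X')
    (h : Susp X ≃ₜ Susp X') (c : Susp X × Rd d → Rd d) (hc : IsCocycleFor h c) :
    ∃ ε > 0, ∀ (S : Susp X) (x : Rd d), ‖x‖ ≤ ε → ‖c (S, x)‖ ≤ 4⁻¹ := by
  haveI : T2Space (Susp X') := t2_susp hX' hX'ap
  haveI : CompactSpace ↥X := isCompact_iff_compactSpace.mp hX.closed.isCompact
  by_contra hcon
  push_neg at hcon
  have hcon' : ∀ j : ℕ, ∃ (S : Susp X) (x : Rd d), ‖x‖ ≤ 1/(j+1) ∧ 4⁻¹ < ‖c (S, x)‖ := by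
    intro j
    obtain ⟨S, x, hx, hcx⟩ := hcon (1/(j+1)) (by positivity)
    exact ⟨S, x, hx, hcx⟩
  choose S xs hxs hcxs using hcon'
  choose P hP hPbox using fun j => exists_rep_box hX (S j)
  -- intermediate value: find points where the cocycle has norm exactly 1/4
  have hIVT : ∀ j : ℕ, ∃ t ∈ Set.Icc (0:ℝ) 1, ‖c (S j, t • xs j)‖ = 4⁻¹ := by
    intro j
    have hFc : ContinuousOn (fun t : ℝ => ‖c (S j, t • xs j)‖) (Set.Icc 0 1) := by
      apply Continuous.continuousOn
      exact ((c_continuous hX hX' hX'ap h c hc (S j)).comp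
        (continuous_id.smul continuous_const)).norm
    have h0 : ‖c (S j, (0:ℝ) • xs j)‖ = 0 := by
      rw [zero_smul, c_zero hX'ap h c hc, norm_zero]
    have hmem : (4⁻¹:ℝ) ∈ Set.Icc (‖c (S j, (0:ℝ) • xs j)‖) (‖c (S j, (1:ℝ) • xs j)‖) := by
      rw [h0, one_smul]
      exact ⟨by norm_num, le_of_lt (hcxs j)⟩
    obtain ⟨t, ht, hFt⟩ := intermediate_value_Icc zero_le_one hFc hmem
    exact ⟨t, ht, hFt⟩
  choose t ht hFt using hIVT
  set y : ℕ → Rd d := fun j => t j • xs j with hy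
  have hynorm : ∀ j, ‖y j‖ ≤ 1/(j+1:ℝ) := by
    intro j
    rw [hy]
    simp only [norm_smul]
    calc ‖t j‖ * ‖xs j‖ ≤ 1 * (1/(j+1:ℝ)) := by
          apply mul_le_mul _ (hxs j) (norm_nonneg _) zero_le_one
          rw [Real.norm_eq_abs, abs_le]
          exact ⟨by linarith [(ht j).1], (ht j).2⟩
    _ = 1/(j+1:ℝ) := one_mul _
  set u : ℕ → Rd d := fun j => c (S j, y j) with hu
  have hunorm : ∀ j, ‖u j‖ = 4⁻¹ := fun j => hFt j
  -- extract convergent subsequences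
  have hK2 : IsCompact ((Set.univ : Set ↥X) ×ˢ {x : Rd d | ∀ i, x i ∈ Set.Icc (0:ℝ) 1}) :=
    isCompact_univ.prod isCompact_box01
  obtain ⟨⟨ωs, ss⟩, -, φ₁, hφ₁, hlim₁⟩ := hK2.tendsto_subseq
    (fun j => Set.mem_prod.mpr ⟨Set.mem_univ _, fun i => hPbox j i⟩)
  obtain ⟨us, husmem, φ₂, hφ₂, hlim₂⟩ := (isCompact_sphere (0 : Rd d) 4⁻¹).tendsto_subseq
    (x := fun j => u (φ₁ j))
    (fun j => by simp [mem_sphere_iff_norm, hunorm])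
  set φ : ℕ → ℕ := φ₁ ∘ φ₂ with hφdef
  have hφ : StrictMono φ := hφ₁.comp hφ₂
  have hlimP : Filter.Tendsto (fun j => P (φ j)) Filter.atTop (𝓝 (ωs, ss)) :=
    hlim₁.comp hφ₂.tendsto_atTop
  have hlimu : Filter.Tendsto (fun j => u (φ j)) Filter.atTop (𝓝 us) := hlim₂
  have hlimy : Filter.Tendsto (fun j => y (φ j)) Filter.atTop (𝓝 0) := by
    apply squeeze_zero_norm (fun j => hynorm (φ j))
    exact tendsto_one_div_add_atTop_nhds_zero_nat.comp hφ.tendsto_atTop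
  set Ts : Susp X := Quot.mk (suspRel X) (ωs, ss) with hTs
  have hrw : ∀ j, y j +ᵥ S j = Quot.mk (suspRel X) ((P j).1, (P j).2 + y j) := by
    intro j; rw [← hP j]; rfl
  have L1 : Filter.Tendsto (fun j => h (y (φ j) +ᵥ S (φ j))) Filter.atTop (𝓝 (h Ts)) := by
    have hpair : Filter.Tendsto (fun j => ((P (φ j)).1, (P (φ j)).2 + y (φ j)))
        Filter.atTop (𝓝 (ωs, ss + 0)) := by
      apply Filter.Tendsto.prodMk_nhds
      · exact (continuous_fst.tendsto _).comp hlimP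
      · exact ((continuous_snd.tendsto _).comp hlimP).add hlimy
    rw [add_zero] at hpair
    have := ((h.continuous.comp continuous_quot_mk).tendsto (ωs, ss)).comp hpair
    apply this.congr
    intro j
    rw [hrw (φ j)]
    rfl
  have L2 : Filter.Tendsto (fun j => u (φ j) +ᵥ h (S (φ j))) Filter.atTop
      (𝓝 (us +ᵥ h Ts)) := by
    have hpair : Filter.Tendsto (fun j => (u (φ j), h (S (φ j)))) Filter.atTop
        (𝓝 (us, h Ts)) := by
      apply Filter.Tendsto.prodMk_nhds hlimu
      have : ∀ j, h (S j) = (h ∘ Quot.mk (suspRel X)) (P j) := by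
        intro j; rw [← hP j]; rfl
      have hcomp : Filter.Tendsto (fun j => (h ∘ Quot.mk (suspRel X)) (P (φ j)))
          Filter.atTop (𝓝 (h Ts)) :=
        ((h.continuous.comp continuous_quot_mk).tendsto (ωs, ss)).comp hlimP
      exact hcomp.congr (fun j => (this (φ j)).symm)
    exact ((continuous_vadd_susp hX').tendsto (us, h Ts)).comp hpair
  have hEq : ∀ j, h (y (φ j) +ᵥ S (φ j)) = u (φ j) +ᵥ h (S (φ j)) := fun j => hc _ _
  have hfinal : h Ts = us +ᵥ h Ts := tendsto_nhds_unique (L1.congr hEq) L2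
  have : (0 : Rd d) = us := by
    apply vadd_cancel_susp hX'ap (T := h Ts)
    rw [zero_vadd_susp]; exact hfinal
  rw [← this] at husmem
  rw [mem_sphere_iff_norm, sub_zero, norm_zero] at husmem
  norm_num at husmem

lemma c_chain_bound (hX'ap : IsAperiodic X')
    (h : Susp X ≃ₜ Susp X') (c : Susp X × Rd d → Rd d) (hc : IsCocycleFor h c)
    {ε : ℝ} (hε : 0 < ε) (hkey : ∀ (S : Susp X) (x : Rd d), ‖x‖ ≤ ε → ‖c (S, x)‖ ≤ 4⁻¹) :
    ∀ (N : ℕ) (S : Susp X) (x : Rd d), ‖x‖ ≤ N * ε → ‖c (S, x)‖ ≤ N * 4⁻¹ := by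
  intro N
  induction N with
  | zero =>
    intro S x hx
    simp only [Nat.cast_zero, zero_mul] at hx ⊢
    have : x = 0 := norm_le_zero_iff.mp hx
    rw [this, c_zero hX'ap h c hc, norm_zero]
  | succ N ih =>
    intro S x hx
    by_cases hxe : ‖x‖ ≤ ε
    · calc ‖c (S, x)‖ ≤ 4⁻¹ := hkey S x hxe
      _ ≤ (N+1 : ℕ) * 4⁻¹ := by
            rw [Nat.cast_add, Nat.cast_one]
            nlinarith [Nat.cast_nonneg (α := ℝ) N]
    · push_neg at hxe
      have hx0 : ‖x‖ ≠ 0 := ne_of_gt (lt_trans hε hxe)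
      set z : Rd d := (ε / ‖x‖) • x with hz
      set w : Rd d := x - z with hw
      have hxw : x = w + z := by rw [hw]; abel
      have hznorm : ‖z‖ = ε := by
        rw [hz, norm_smul, Real.norm_eq_abs, abs_of_pos (by positivity)]
        field_simp
      have hwnorm : ‖w‖ = ‖x‖ - ε := by
        have : w = (1 - ε / ‖x‖) • x := by
          rw [hw, hz, sub_smul, one_smul]
        rw [this, norm_smul, Real.norm_eq_abs]
        rw [abs_of_nonneg (by
          rw [sub_nonneg]
          apply div_le_one_of_le₀ (le_of_lt hxe) (norm_nonneg _))]
        field_simp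
      have hwle : ‖w‖ ≤ N * ε := by
        rw [hwnorm]
        have : (N+1 : ℕ) * ε = N * ε + ε := by push_cast; ring
        rw [this] at hx
        linarith
      have := c_add hX'ap h c hc S w z
      rw [hxw, this]
      calc ‖c (S, z) + c (z +ᵥ S, w)‖ ≤ ‖c (S, z)‖ + ‖c (z +ᵥ S, w)‖ := norm_add_le _ _
      _ ≤ 4⁻¹ + N * 4⁻¹ := by
            apply add_le_add (hkey S z (le_of_eq hznorm)) (ih (z +ᵥ S) w hwle)
      _ = (N+1 : ℕ) * 4⁻¹ := by push_cast; ring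

lemma c_norm_bound (hX : IsSubshift X) (hX' : IsSubshift X') (hX'ap : IsAperiodic X')
    (h : Susp X ≃ₜ Susp X') (c : Susp X × Rd d → Rd d) (hc : IsCocycleFor h c)
    (lam : ℝ) : ∃ M : ℝ, ∀ (S : Susp X) (x : Rd d), ‖x‖ ≤ lam → ‖c (S, x)‖ ≤ M := by
  obtain ⟨ε, hε, hkey⟩ := key_eps hX hX' hX'ap h c hc
  refine ⟨(⌈lam / ε⌉₊ : ℝ) * 4⁻¹, fun S x hx => ?_⟩
  apply c_chain_bound hX'ap h c hc hε hkey
  calc ‖x‖ ≤ lam := hx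
  _ ≤ (⌈lam / ε⌉₊ : ℝ) * ε := by
        rw [← div_le_iff₀ hε]
        exact Nat.le_ceil _
end Bounds
section Cylinders

variable {d : ℕ} {A : Type*} [TopologicalSpace A] [DiscreteTopology A] {X : Set (Zd d → A)}

lemma box_mono {ν ν' : ℕ} (hνν' : ν ≤ ν') : box d ν ⊆ box d ν' := by
  intro k hk i
  exact le_trans (hk i) (by exact_mod_cast hνν')

lemma box_finite (ν : ℕ) : (box d ν).Finite := by
  apply Set.Finite.subset (Set.Finite.pi (t := fun _ : Fin d => Set.Icc (-(ν:ℤ)) ν)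
    (fun _ => Set.finite_Icc _ _))
  intro k hk i _
  exact Set.mem_Icc.mpr (abs_le.mp (hk i))

lemma cylinder_subset_open {U : Set ↥X} (hU : IsOpen U) {ω : ↥X} (hω : ω ∈ U) :
    ∃ ν : ℕ, ∀ ω' : ↥X, (∀ j ∈ box d ν, (ω' : Zd d → A) j = (ω : Zd d → A) j) → ω' ∈ U := by
  obtain ⟨V, hV, rfl⟩ := isOpen_induced_iff.mp hU
  obtain ⟨I, u, hu, hsub⟩ := isOpen_pi_iff.mp hV (ω : Zd d → A) hω
  set ν : ℕ := I.sup (fun k => Finset.univ.sup (fun i => (k i).natAbs)) with hν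
  refine ⟨ν, fun ω' hω' => ?_⟩
  apply hsub
  intro k hk
  have hkbox : k ∈ box d ν := by
    intro i
    have h1 : (k i).natAbs ≤ Finset.univ.sup (fun i => (k i).natAbs) :=
      Finset.le_sup (f := fun i => (k i).natAbs) (Finset.mem_univ i)
    have h2 : Finset.univ.sup (fun i => (k i).natAbs) ≤ ν :=
      Finset.le_sup (f := fun k => Finset.univ.sup (fun i => (k i).natAbs)) hk
    calc |k i| = ((k i).natAbs : ℤ) := Int.abs_eq_natAbs _
    _ ≤ (ν : ℤ) := by exact_mod_cast le_trans h1 h2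
  rw [hω' k hkbox]
  exact (hu k hk).2

lemma cylinder_isOpen (ω : ↥X) (ν : ℕ) :
    IsOpen {ω' : ↥X | ∀ j ∈ box d ν, (ω' : Zd d → A) j = (ω : Zd d → A) j} := by
  have : {ω' : ↥X | ∀ j ∈ box d ν, (ω' : Zd d → A) j = (ω : Zd d → A) j} =
      ⋂ j ∈ box d ν, {ω' : ↥X | (ω' : Zd d → A) j = (ω : Zd d → A) j} := by
    ext ω'; simp
  rw [this]
  apply (box_finite ν).isOpen_biInter
  intro j _
  have : Continuous (fun ω' : ↥X => (ω' : Zd d → A) j) :=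
    (continuous_apply j).comp continuous_subtype_val
  exact IsOpen.preimage this (isOpen_discrete {(ω : Zd d → A) j})

end Cylinders
theorem cocycle_return_vectors_locally_constant
    {d : ℕ} (hd : 1 ≤ d)
    {A A' : Type*} [Fintype A] [Nonempty A] [TopologicalSpace A] [DiscreteTopology A]
    [Fintype A'] [Nonempty A'] [TopologicalSpace A'] [DiscreteTopology A']
    (X : Set (Zd d → A)) (X' : Set (Zd d → A'))
    (hX : IsSubshift X) (hX' : IsSubshift X')
    (hXmin : IsMinimal X) (hX'min : IsMinimal X')
    (hXap : IsAperiodic X) (hX'ap : IsAperiodic X')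
    (h : Susp X ≃ₜ Susp X')
    (htrans : ⇑h '' Set.range (iota X) = Set.range (iota X'))
    (c : Susp X × Rd d → Rd d) (hc : IsCocycleFor h c) :
    (∀ (ω : X) (n : Zd d), ∃ m : Zd d, c (iota X ω, toRd n) = toRd m) ∧
    (∀ lam : ℝ, 0 < lam → ∃ ν : ℕ, ∀ n : Zd d, ‖toRd n‖ ≤ lam →
      ∀ ω₁ ω₂ : X, (∀ j ∈ box d ν, (ω₁ : Zd d → A) j = (ω₂ : Zd d → A) j) →
        c (iota X ω₁, toRd n) = c (iota X ω₂, toRd n)) ∧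
    (∀ n : Zd d,
      IsLocallyConstant (fun ω : X => c (iota X ω, toRd n)) ∧
      (Set.range (fun ω : X => c (iota X ω, toRd n))).Finite) := by
  classical
  haveI : T2Space (Susp X') := t2_susp hX' hX'ap
  haveI : CompactSpace ↥X := isCompact_iff_compactSpace.mp hX.closed.isCompact
  have hiota : Continuous (iota X) :=
    continuous_quot_mk.comp (continuous_id.prodMk continuous_const)
  have hvadd : ∀ (n : Zd d) (ω : ↥X), toRd n +ᵥ iota X ω = iota X (shiftMap hX n ω) := by
    intro n ω
    show Quot.mk (suspRel X) (ω, 0 + toRd n) = Quot.mk (suspRel X) (shiftMap hX n ω, 0)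
    apply Quot.sound
    exact ⟨n, rfl, by rw [zero_add, sub_self]⟩
  -- part (a) : integrality of the cocycle on the transversal
  have hint : ∀ (ω : ↥X) (n : Zd d), ∃ m : Zd d, c (iota X ω, toRd n) = toRd m := by
    intro ω n
    have h1 : h (iota X ω) ∈ Set.range (iota X') := by
      rw [← htrans]
      exact ⟨iota X ω, ⟨ω, rfl⟩, rfl⟩
    obtain ⟨ω', hω'⟩ := h1
    have h2 : h (iota X (shiftMap hX n ω)) ∈ Set.range (iota X') := by
      rw [← htrans]
      exact ⟨iota X (shiftMap hX n ω), ⟨_, rfl⟩, rfl⟩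
    obtain ⟨ω'', hω''⟩ := h2
    have h3 : h (toRd n +ᵥ iota X ω) = c (iota X ω, toRd n) +ᵥ h (iota X ω) := hc _ _
    rw [hvadd n ω, ← hω', ← hω''] at h3
    have h4 : Quot.mk (suspRel X') (ω'', 0) =
        Quot.mk (suspRel X') (ω', 0 + c (iota X ω, toRd n)) := h3
    obtain ⟨k, -, hk2⟩ := susp_mk_eq_iff.mp h4.symm
    refine ⟨k, ?_⟩
    have h5 : (0 : Rd d) = 0 + c (iota X ω, toRd n) - toRd k := hk2
    rw [zero_add] at h5
    exact sub_eq_zero.mp h5.symm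
  -- characterization of the value via a closed condition
  have hchar : ∀ (ω : ↥X) (n m : Zd d), c (iota X ω, toRd n) = toRd m ↔
      h (iota X (shiftMap hX n ω)) = toRd m +ᵥ h (iota X ω) := by
    intro ω n m
    constructor
    · intro hcm
      rw [← hvadd n ω, hc _ _, hcm]
    · intro hm
      rw [← hvadd n ω, hc _ _] at hm
      exact vadd_cancel_susp hX'ap hm
  set C : Zd d → Zd d → Set ↥X := fun n m =>
    {ω : ↥X | h (iota X (shiftMap hX n ω)) = toRd m +ᵥ h (iota X ω)} with hC
  have hCclosed : ∀ n m, IsClosed (C n m) := by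
    intro n m
    apply isClosed_eq
    · exact h.continuous.comp (hiota.comp (continuous_subtype_shift hX n))
    · have : Continuous (fun T : Susp X' => toRd m +ᵥ T) :=
        (continuous_vadd_susp hX').comp (continuous_const.prodMk continuous_id)
      exact this.comp (h.continuous.comp hiota)
  have hCdisj : ∀ n m m' (ω : ↥X), ω ∈ C n m → ω ∈ C n m' → m = m' := by
    intro n m m' ω hm hm'
    rw [hC] at hm hm'
    have := hm.symm.trans hm'
    exact toRd_inj (vadd_cancel_susp hX'ap this)
  -- for each n, a finite family of possible values and openness
  have hmain : ∀ n : Zd d, ∃ F : Set (Zd d), F.Finite ∧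
      (∀ ω : ↥X, ∃ m ∈ F, ω ∈ C n m) ∧ (∀ m₀, IsOpen (C n m₀)) := by
    intro n
    obtain ⟨M, hM⟩ := c_norm_bound hX hX' hX'ap h c hc ‖toRd n‖
    refine ⟨{m : Zd d | ‖toRd m‖ ≤ M}, finite_lattice_ball M, ?_, ?_⟩
    · intro ω
      obtain ⟨m, hm⟩ := hint ω n
      refine ⟨m, ?_, (hchar ω n m).mp hm⟩
      show ‖toRd m‖ ≤ M
      rw [← hm]
      exact hM _ _ le_rfl
    · intro m₀
      have hopen : C n m₀ = (⋃ m ∈ {m : Zd d | ‖toRd m‖ ≤ M} \ {m₀}, C n m)ᶜ := by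
        ext ω
        simp only [Set.mem_compl_iff, Set.mem_iUnion, not_exists, Set.mem_diff,
          Set.mem_singleton_iff, Set.mem_setOf_eq, exists_prop, not_and]
        constructor
        · intro hω m hm hmem
          exact absurd (hCdisj n m m₀ ω hmem hω) hm.2
        · intro hω
          obtain ⟨m, hm, hmem⟩ : ∃ m ∈ {m : Zd d | ‖toRd m‖ ≤ M}, ω ∈ C n m := by
            obtain ⟨m, hm⟩ := hint ω n
            refine ⟨m, ?_, (hchar ω n m).mp hm⟩
            show ‖toRd m‖ ≤ M
            rw [← hm]
            exact hM _ _ le_rfl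
          by_cases hmm : m = m₀
          · rwa [hmm] at hmem
          · exact absurd hmem (hω m ⟨hm, hmm⟩)
      rw [hopen]
      exact (Set.Finite.isClosed_biUnion ((finite_lattice_ball M).diff (t := {m₀}))
        (fun m _ => hCclosed n m)).isOpen_compl
  -- part (c)
  have hpartc : ∀ n : Zd d,
      IsLocallyConstant (fun ω : ↥X => c (iota X ω, toRd n)) ∧
      (Set.range (fun ω : ↥X => c (iota X ω, toRd n))).Finite := by
    intro n
    obtain ⟨F, hFfin, hFcov, hFopen⟩ := hmain n
    constructor
    · rw [IsLocallyConstant.iff_exists_open]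
      intro ω
      obtain ⟨m, hm⟩ := hint ω n
      refine ⟨C n m, hFopen m, (hchar ω n m).mp hm, ?_⟩
      intro ω' hω'
      rw [(hchar ω' n m).mpr hω', hm]
    · apply Set.Finite.subset (hFfin.image toRd)
      rintro v ⟨ω, rfl⟩
      obtain ⟨m, hmF, hmem⟩ := hFcov ω
      exact ⟨m, hmF, ((hchar ω n m).mpr hmem).symm⟩
  -- part (b)
  refine ⟨hint, ?_, hpartc⟩
  intro lam hlam
  have hNfin : {n : Zd d | ‖toRd n‖ ≤ lam}.Finite := finite_lattice_ball lam
  -- for each ω and n, a cylinder on which the value is constant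
  have hν : ∀ (ω : ↥X) (n : Zd d), ∃ ν0 : ℕ, ∀ ω' : ↥X,
      (∀ j ∈ box d ν0, (ω' : Zd d → A) j = (ω : Zd d → A) j) →
      c (iota X ω', toRd n) = c (iota X ω, toRd n) := by
    intro ω n
    obtain ⟨F, hFfin, hFcov, hFopen⟩ := hmain n
    obtain ⟨m, hm⟩ := hint ω n
    obtain ⟨ν0, hν0⟩ := cylinder_subset_open (hFopen m) ((hchar ω n m).mp hm)
    refine ⟨ν0, fun ω' hω' => ?_⟩
    rw [(hchar ω' n m).mpr (hν0 ω' hω'), hm]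
  choose g hg using hν
  set ν : ↥X → ℕ := fun ω => hNfin.toFinset.sup (g ω) with hνdef
  set W : ↥X → Set ↥X := fun ω =>
    {ω' : ↥X | ∀ j ∈ box d (ν ω), (ω' : Zd d → A) j = (ω : Zd d → A) j} with hWdef
  have hWopen : ∀ ω, IsOpen (W ω) := fun ω => cylinder_isOpen ω (ν ω)
  have hcover : (Set.univ : Set ↥X) ⊆ ⋃ ω, W ω := by
    intro ω _
    exact Set.mem_iUnion.mpr ⟨ω, fun j _ => rfl⟩
  obtain ⟨t, ht⟩ := isCompact_univ.elim_finite_subcover W hWopen hcover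
  refine ⟨t.sup ν, ?_⟩
  intro n hn ω₁ ω₂ hagree
  obtain ⟨ωh, hωht, hω₁W⟩ : ∃ ωh ∈ t, ω₁ ∈ W ωh := by
    have := ht (Set.mem_univ ω₁)
    simpa using this
  have hgn : g ωh n ≤ ν ωh := Finset.le_sup (hNfin.mem_toFinset.mpr hn)
  have hνt : ν ωh ≤ t.sup ν := Finset.le_sup hωht
  have h₁ : c (iota X ω₁, toRd n) = c (iota X ωh, toRd n) := by
    apply hg ωh n ω₁
    intro j hj
    exact hω₁W j (box_mono hgn hj)
  have hω₂W : ω₂ ∈ W ωh := by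
    intro j hj
    rw [← hagree j (box_mono hνt hj)]
    exact hω₁W j hj
  have h₂ : c (iota X ω₂, toRd n) = c (iota X ωh, toRd n) := by
    apply hg ωh n ω₂
    intro j hj
    exact hω₂W j (box_mono hgn hj)
  rw [h₁, h₂]
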